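/- The digits of the binary expansion of an exponential random variable are mutually independent: if B ~ Exp(λ), the random variables (B_l)_{l∈ℤ} defined by the binary digits of B are mutually independent. -/

import Mathlib

open MeasureTheory ProbabilityTheory Real Set

namespace Stmt2Aux

lemma expMeasure_eq (r : ℝ) :
    expMeasure r = MeasureTheory.volume.withDensity (exponentialPDF r) := rfl

lemma mdigit (a : ℤ) : Measurable fun x : ℝ => ⌊x / 2 ^ a⌋ % 2 := by
  have h1 : Measurable fun x : ℝ => ⌊x / 2 ^ a⌋ :=
    Int.measurable_floor.comp (measurable_id.div_const _)
  exact (measurable_from_top (f := fun n : ℤ => n % 2)).comp h1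

lemma measurableSet_digit (a : ℤ) (T : Set ℤ) :
    MeasurableSet {x : ℝ | ⌊x / 2 ^ a⌋ % 2 ∈ T} :=
  mdigit a trivial

/-- measure of the negative half line is zero -/
lemma expMeasure_Iio (lam : ℝ) : expMeasure lam (Set.Iio 0) = 0 := by
  rw [expMeasure_eq, withDensity_apply _ measurableSet_Iio]
  exact lintegral_exponentialPDF_of_nonpos le_rfl

lemma expMeasure_inter_Ici (lam : ℝ) (E : Set ℝ) :
    expMeasure lam (E ∩ Set.Ici 0) = expMeasure lam E := by
  refine le_antisymm (measure_mono Set.inter_subset_left) ?_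
  calc expMeasure lam E ≤ expMeasure lam (E ∩ Set.Ici 0 ∪ Set.Iio 0) := by
        refine measure_mono fun x hx => ?_
        by_cases h : (0:ℝ) ≤ x
        · exact Or.inl ⟨hx, h⟩
        · exact Or.inr (lt_of_not_ge h)
    _ ≤ expMeasure lam (E ∩ Set.Ici 0) + expMeasure lam (Set.Iio 0) := measure_union_le _ _
    _ = expMeasure lam (E ∩ Set.Ici 0) := by rw [expMeasure_Iio, add_zero]

/-- shift identity for the exponential measure -/
lemma shift (lam c : ℝ) (hc : 0 ≤ c) {E : Set ℝ} (hE : MeasurableSet E)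
    (hE0 : E ⊆ Set.Ici 0) :
    expMeasure lam ((fun x => x - c) ⁻¹' E) =
      ENNReal.ofReal (Real.exp (-(lam * c))) * expMeasure lam E := by
  have hm : Measurable fun x : ℝ => x - c := measurable_id.sub_const c
  have hEm : MeasurableSet ((fun x : ℝ => x - c) ⁻¹' E) := hm hE
  rw [expMeasure_eq, withDensity_apply _ hEm, withDensity_apply _ hE]
  have hpdf : Measurable (exponentialPDF lam) := by
    unfold exponentialPDF
    exact (measurable_exponentialPDFReal lam).ennreal_ofReal
  calc ∫⁻ x in (fun x => x - c) ⁻¹' E, exponentialPDF lam x ∂volume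
      = ∫⁻ x, E.indicator (fun y => exponentialPDF lam (y + c)) (x - c) ∂volume := by
        rw [← lintegral_indicator hEm]
        congr 1
        ext x
        by_cases h : x - c ∈ E
        · simp [Set.indicator_of_mem, h, sub_add_cancel, Set.indicator,
            Set.mem_preimage]
        · simp [Set.indicator, h, Set.mem_preimage]
    _ = ∫⁻ x, E.indicator (fun y => exponentialPDF lam (y + c)) x ∂volume := by
        have := lintegral_add_right_eq_self
          (μ := (volume : Measure ℝ))
          (E.indicator (fun y => exponentialPDF lam (y + c))) (-c)
        simpa [sub_eq_add_neg] using this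
    _ = ∫⁻ x in E, exponentialPDF lam (x + c) ∂volume := by
        rw [lintegral_indicator hE]
    _ = ∫⁻ x in E, ENNReal.ofReal (Real.exp (-(lam * c))) * exponentialPDF lam x ∂volume := by
        refine setLIntegral_congr_fun hE (fun x hx => ?_)
        have hx0 : (0:ℝ) ≤ x := hE0 hx
        rw [exponentialPDF_of_nonneg (by linarith), exponentialPDF_of_nonneg hx0,
          ← ENNReal.ofReal_mul (Real.exp_nonneg _)]
        congr 1
        rw [mul_left_comm, ← Real.exp_add]
        ring_nf
    _ = ENNReal.ofReal (Real.exp (-(lam * c))) * ∫⁻ x in E, exponentialPDF lam x ∂volume := by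
        rw [lintegral_const_mul _ hpdf]

lemma floor_shift (a : ℤ) (x : ℝ) : ⌊(x + 2 ^ a) / 2 ^ a⌋ = ⌊x / 2 ^ a⌋ + 1 := by
  have h2 : (0:ℝ) < 2 ^ a := by positivity
  rw [add_div, div_self (ne_of_gt h2)]
  exact_mod_cast Int.floor_add_intCast (x / 2 ^ a) 1

lemma digit_shift {i a : ℤ} (h : i < a) (x : ℝ) :
    ⌊(x + 2 ^ a) / 2 ^ i⌋ % 2 = ⌊x / 2 ^ i⌋ % 2 := by
  obtain ⟨k, hk⟩ : ∃ k : ℕ, a - i = ((k + 1 : ℕ) : ℤ) := ⟨(a - i - 1).toNat, by omega⟩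
  have h2 : (x + 2 ^ a) / 2 ^ i = x / 2 ^ i + ((2 ^ (k + 1) : ℤ) : ℝ) := by
    rw [add_div]
    congr 1
    rw [← zpow_sub₀ (two_ne_zero : (2:ℝ) ≠ 0), hk, zpow_natCast]
    push_cast
    ring
  rw [h2, Int.floor_add_intCast]
  have h3 : (2:ℤ) ^ (k + 1) = 2 ^ k * 2 := by ring
  rw [h3, Int.add_mul_emod_self_right]

/-- the main step: shifting a periodic set intersected with digit 1 gives digit 0 -/
lemma set_shift (lam : ℝ) (a : ℤ) {A : Set ℝ}
    (hper : ∀ x : ℝ, x ∈ A ↔ x + 2 ^ a ∈ A) :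
    A ∩ {x : ℝ | ⌊x / 2 ^ a⌋ % 2 = 1} ∩ Set.Ici 0 =
      (fun x : ℝ => x - 2 ^ a) ⁻¹' (A ∩ {x : ℝ | ⌊x / 2 ^ a⌋ % 2 = 0} ∩ Set.Ici 0) := by
  have h2 : (0:ℝ) < 2 ^ a := by positivity
  ext x
  simp only [Set.mem_inter_iff, Set.mem_setOf_eq, Set.mem_preimage, Set.mem_Ici]
  constructor
  · rintro ⟨⟨hxA, hx1⟩, hx0⟩
    have hge : (1:ℤ) ≤ ⌊x / 2 ^ a⌋ := by
      have : (0:ℤ) ≤ ⌊x / 2 ^ a⌋ := Int.le_floor.2 (by push_cast; exact div_nonneg hx0 h2.le)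
      omega
    have hxc : 2 ^ a ≤ x := by
      have := (Int.le_floor.1 hge)
      push_cast at this
      have := (one_le_div h2).1 this
      linarith
    have hfl : ⌊x / 2 ^ a⌋ = ⌊(x - 2 ^ a) / 2 ^ a⌋ + 1 := by
      have := floor_shift a (x - 2 ^ a)
      rw [sub_add_cancel] at this
      omega
    refine ⟨⟨?_, by omega⟩, by linarith⟩
    · have := (hper (x - 2 ^ a)).2
      rw [sub_add_cancel] at this
      exact this hxA
  · rintro ⟨⟨hxA, hx1⟩, hx0⟩
    have hfl : ⌊x / 2 ^ a⌋ = ⌊(x - 2 ^ a) / 2 ^ a⌋ + 1 := by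
      have := floor_shift a (x - 2 ^ a)
      rw [sub_add_cancel] at this
      omega
    refine ⟨⟨?_, by omega⟩, by linarith⟩
    · have := (hper (x - 2 ^ a)).1 hxA
      rwa [sub_add_cancel] at this

lemma measure_inter_digit_one (lam : ℝ) (a : ℤ) {A : Set ℝ} (hA : MeasurableSet A)
    (hper : ∀ x : ℝ, x ∈ A ↔ x + 2 ^ a ∈ A) :
    expMeasure lam (A ∩ {x : ℝ | ⌊x / 2 ^ a⌋ % 2 = 1}) =
      ENNReal.ofReal (Real.exp (-(lam * 2 ^ a))) *
        expMeasure lam (A ∩ {x : ℝ | ⌊x / 2 ^ a⌋ % 2 = 0}) := by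
  have h2 : (0:ℝ) < 2 ^ a := by positivity
  have hm0 : MeasurableSet (A ∩ {x : ℝ | ⌊x / 2 ^ a⌋ % 2 = 0} ∩ Set.Ici 0) :=
    ((hA.inter (measurableSet_digit a {0})).inter measurableSet_Ici)
  calc expMeasure lam (A ∩ {x : ℝ | ⌊x / 2 ^ a⌋ % 2 = 1})
      = expMeasure lam (A ∩ {x : ℝ | ⌊x / 2 ^ a⌋ % 2 = 1} ∩ Set.Ici 0) :=
        (expMeasure_inter_Ici lam _).symm
    _ = expMeasure lam
        ((fun x : ℝ => x - 2 ^ a) ⁻¹' (A ∩ {x : ℝ | ⌊x / 2 ^ a⌋ % 2 = 0} ∩ Set.Ici 0)) := by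
        rw [set_shift lam a hper]
    _ = ENNReal.ofReal (Real.exp (-(lam * 2 ^ a))) *
        expMeasure lam (A ∩ {x : ℝ | ⌊x / 2 ^ a⌋ % 2 = 0} ∩ Set.Ici 0) :=
        shift lam (2 ^ a) (le_of_lt h2) hm0 Set.inter_subset_right
    _ = ENNReal.ofReal (Real.exp (-(lam * 2 ^ a))) *
        expMeasure lam (A ∩ {x : ℝ | ⌊x / 2 ^ a⌋ % 2 = 0}) := by
        rw [expMeasure_inter_Ici]



lemma measure_inter_digit (lam : ℝ) (hlam : 0 < lam) (a : ℤ) {A : Set ℝ}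
    (hA : MeasurableSet A) (hper : ∀ x : ℝ, x ∈ A ↔ x + 2 ^ a ∈ A) (T : Set ℤ) :
    expMeasure lam (A ∩ (fun x : ℝ => ⌊x / 2 ^ a⌋ % 2) ⁻¹' T) =
      expMeasure lam ((fun x : ℝ => ⌊x / 2 ^ a⌋ % 2) ⁻¹' T) * expMeasure lam A := by
  haveI := isProbabilityMeasure_expMeasure hlam
  set μ := expMeasure lam with hμ
  set D0 : Set ℝ := {x : ℝ | ⌊x / 2 ^ a⌋ % 2 = 0} with hD0
  set D1 : Set ℝ := {x : ℝ | ⌊x / 2 ^ a⌋ % 2 = 1} with hD1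
  set c := ENNReal.ofReal (Real.exp (-(lam * 2 ^ a))) with hc
  have hper_univ : ∀ x : ℝ, x ∈ (Set.univ : Set ℝ) ↔ x + 2 ^ a ∈ (Set.univ : Set ℝ) := by
    simp
  have e1 : μ (A ∩ D1) = c * μ (A ∩ D0) := measure_inter_digit_one lam a hA hper
  have e2 : μ D1 = c * μ D0 := by
    have := measure_inter_digit_one lam a MeasurableSet.univ hper_univ
    simp only [Set.univ_inter] at this
    exact this
  have hsplit : ∀ B : Set ℝ, MeasurableSet B → μ B = μ (B ∩ D0) + μ (B ∩ D1) := by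
    intro B hB
    have hdisj : Disjoint (B ∩ D0) (B ∩ D1) := by
      rw [Set.disjoint_left]
      rintro x ⟨-, h0⟩ ⟨-, h1⟩
      rw [hD0, Set.mem_setOf_eq] at h0
      rw [hD1, Set.mem_setOf_eq] at h1
      omega
    have hunion : (B ∩ D0) ∪ (B ∩ D1) = B := by
      ext x
      simp only [Set.mem_union, Set.mem_inter_iff, hD0, hD1, Set.mem_setOf_eq]
      constructor
      · rintro (⟨h, -⟩ | ⟨h, -⟩) <;> exact h
      · intro h
        rcases Int.emod_two_eq ⌊x / 2 ^ a⌋ with h' | h'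
        · exact Or.inl ⟨h, h'⟩
        · exact Or.inr ⟨h, h'⟩
    conv_lhs => rw [← hunion]
    exact measure_union hdisj (hB.inter (measurableSet_digit a {1}))
  have hA0 : μ A = μ (A ∩ D0) + c * μ (A ∩ D0) := by
    rw [hsplit A hA, e1]
  have hu : μ D0 + c * μ D0 = 1 := by
    have := hsplit Set.univ MeasurableSet.univ
    simp only [Set.univ_inter, measure_univ] at this
    rw [← e2, ← this]
  have v0 : μ (A ∩ D0) = μ D0 * μ A := by
    calc μ (A ∩ D0) = 1 * μ (A ∩ D0) := (one_mul _).symm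
      _ = (μ D0 + c * μ D0) * μ (A ∩ D0) := by rw [hu]
      _ = μ D0 * (μ (A ∩ D0) + c * μ (A ∩ D0)) := by ring
      _ = μ D0 * μ A := by rw [← hA0]
  have v1 : μ (A ∩ D1) = μ D1 * μ A := by
    rw [e1, e2, v0]
    ring
  by_cases h0 : (0 : ℤ) ∈ T <;> by_cases h1 : (1 : ℤ) ∈ T
  · have hT : (fun x : ℝ => ⌊x / 2 ^ a⌋ % 2) ⁻¹' T = Set.univ := by
      ext x
      simp only [Set.mem_preimage, Set.mem_univ, iff_true]
      rcases Int.emod_two_eq ⌊x / 2 ^ a⌋ with h' | h' <;> rw [h']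
      · exact h0
      · exact h1
    rw [hT, Set.inter_univ, measure_univ, one_mul]
  · have hT : (fun x : ℝ => ⌊x / 2 ^ a⌋ % 2) ⁻¹' T = D0 := by
      ext x
      simp only [Set.mem_preimage, hD0, Set.mem_setOf_eq]
      constructor
      · intro h
        rcases Int.emod_two_eq ⌊x / 2 ^ a⌋ with h' | h'
        · exact h'
        · exact absurd (h' ▸ h) h1
      · intro h
        rw [h]
        exact h0
    rw [hT]
    exact v0
  · have hT : (fun x : ℝ => ⌊x / 2 ^ a⌋ % 2) ⁻¹' T = D1 := by
      ext x
      simp only [Set.mem_preimage, hD1, Set.mem_setOf_eq]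
      constructor
      · intro h
        rcases Int.emod_two_eq ⌊x / 2 ^ a⌋ with h' | h'
        · exact absurd (h' ▸ h) h0
        · exact h'
      · intro h
        rw [h]
        exact h1
    rw [hT]
    exact v1
  · have hT : (fun x : ℝ => ⌊x / 2 ^ a⌋ % 2) ⁻¹' T = ∅ := by
      ext x
      simp only [Set.mem_preimage, Set.mem_empty_iff_false, iff_false]
      intro h
      rcases Int.emod_two_eq ⌊x / 2 ^ a⌋ with h' | h'
      · exact h0 (h' ▸ h)
      · exact h1 (h' ▸ h)
    rw [hT, Set.inter_empty]
    simp

end Stmt2Aux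

open MeasureTheory ProbabilityTheory

theorem stmt_2 (lam : ℝ) (hlam : 0 < lam) :
    iIndepFun (m := fun _ : ℤ => (inferInstance : MeasurableSpace ℤ))
      (fun (l : ℤ) (x : ℝ) => ⌊x / 2 ^ l⌋ % 2) (expMeasure lam) := by
  haveI := isProbabilityMeasure_expMeasure hlam
  rw [ProbabilityTheory.iIndepFun_iff_measure_inter_preimage_eq_mul]
  intro S sets H
  clear H
  classical
  induction S using Finset.induction_on_max with
  | empty => simp
  | insert a s ha ih =>
    have hanot : a ∉ s := fun h => lt_irrefl a (ha a h)
    rw [Finset.set_biInter_insert, Finset.prod_insert hanot, Set.inter_comm]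
    have hAmeas : MeasurableSet
        (⋂ i ∈ s, (fun x : ℝ => ⌊x / 2 ^ i⌋ % 2) ⁻¹' sets i) :=
      Finset.measurableSet_biInter s fun i _ => Stmt2Aux.mdigit i trivial
    have hper : ∀ x : ℝ,
        x ∈ (⋂ i ∈ s, (fun x : ℝ => ⌊x / 2 ^ i⌋ % 2) ⁻¹' sets i) ↔
        x + 2 ^ a ∈ (⋂ i ∈ s, (fun x : ℝ => ⌊x / 2 ^ i⌋ % 2) ⁻¹' sets i) := by
      intro x
      simp only [Set.mem_iInter, Set.mem_preimage]
      refine forall_congr' fun i => imp_congr_right fun hi => ?_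
      rw [Stmt2Aux.digit_shift (ha i hi)]
    have hkey := Stmt2Aux.measure_inter_digit lam hlam a hAmeas hper (sets a)
    rw [hkey, ih]
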